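/- Let p be a prime and n ≥ 2. Let U be the group of upper triangular matrices in SL(n, ℚ_p) with all diagonal entries equal to 1. Then every element of U generates a relatively compact cyclic subgroup of GL(n, ℚ_p), yet the family of maps {T̄ : T ∈ U} does not act distally on S_n. -/

import Mathlib

open scoped MatrixGroups

/-- The real number `r`, assumed to be an integer power of `p`, interpreted as the
corresponding scalar in `ℚ_p` (junk value otherwise). -/
noncomputable def realToPadic (p : ℕ) [Fact p.Prime] (r : ℝ) : ℚ_[p] :=
  (p : ℚ_[p]) ^ ⌊Real.logb p r⌋

/-- The map `T̄` induced on the `p`-adic unit sphere by the matrix `T`: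
`T̄(x) = ‖T(x)‖_p ⬝ T(x)`. -/
noncomputable def sphereMap (p : ℕ) [Fact p.Prime] {n : ℕ}
    (T : Matrix (Fin n) (Fin n) ℚ_[p]) (y : Fin n → ℚ_[p]) : Fin n → ℚ_[p] :=
  realToPadic p ‖T.mulVec y‖ • T.mulVec y

/-- A family `S` of self-maps acts distally on an invariant subset `A`. -/
def ActsDistallyOn {X : Type*} [TopologicalSpace X] (S : Set (X → X)) (A : Set X) : Prop :=
  ∀ x ∈ A, ∀ y ∈ A, x ≠ y → ∀ d ∈ A, (d, d) ∉ closure ((fun f => (f x, f y)) '' S)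

/-- The group of strictly upper triangular (= upper triangular with all diagonal entries `1`)
matrices in `SL(n, ℚ_p)`, viewed inside `GL(n, ℚ_p)`. -/
def unipotentUpper (p : ℕ) [Fact p.Prime] (n : ℕ) : Set (GL (Fin n) ℚ_[p]) :=
  {A | (∀ i j : Fin n, j < i → (A : Matrix (Fin n) (Fin n) ℚ_[p]) i j = 0) ∧
       ∀ i : Fin n, (A : Matrix (Fin n) (Fin n) ℚ_[p]) i i = 1}

section Aux

variable (p : ℕ) [Fact p.Prime]

lemma entry_bound {n : ℕ} (A : GL (Fin n) ℚ_[p]) (hA : A ∈ unipotentUpper p n) :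
    ∃ c : ℝ, 0 < c ∧ ∀ (k : ℤ) (i j : Fin n),
      ‖((A ^ k : GL (Fin n) ℚ_[p]) : Matrix (Fin n) (Fin n) ℚ_[p]) i j‖ ≤ c := by
  obtain ⟨hlow, hdiag⟩ := hA
  have hp : (1:ℝ) < p := by exact_mod_cast (Fact.out : p.Prime).one_lt
  have hp0 : (p : ℚ_[p]) ≠ 0 := by
    exact_mod_cast Nat.cast_ne_zero.2 (Fact.out : p.Prime).ne_zero
  -- choose a uniform bound p^t on the entries of A
  obtain ⟨t, ht⟩ : ∃ t : ℕ, ∀ i j : Fin n,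
      ‖(A : Matrix (Fin n) (Fin n) ℚ_[p]) i j‖ ≤ (p:ℝ) ^ t := by
    obtain ⟨t, ht⟩ := pow_unbounded_of_one_lt
      (((Finset.univ : Finset (Fin n × Fin n)).sup
        fun ij => ‖(A : Matrix (Fin n) (Fin n) ℚ_[p]) ij.1 ij.2‖₊ : NNReal) : ℝ) hp
    refine ⟨t, fun i j => le_trans ?_ ht.le⟩
    exact_mod_cast NNReal.coe_le_coe.2 (Finset.le_sup (f := fun ij : Fin n × Fin n =>
      ‖(A : Matrix (Fin n) (Fin n) ℚ_[p]) ij.1 ij.2‖₊) (Finset.mem_univ (i, j)))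
  -- conjugating diagonal matrix
  set d : Fin n → ℚ_[p] := fun i => (p : ℚ_[p]) ^ (-(t * (i:ℕ) : ℤ)) with hddef
  set d' : Fin n → ℚ_[p] := fun i => (p : ℚ_[p]) ^ ((t * (i:ℕ) : ℤ)) with hd'def
  have hdd' : Matrix.diagonal d * Matrix.diagonal d' = 1 := by
    rw [Matrix.diagonal_mul_diagonal]
    have : (fun i => d i * d' i) = fun _ => (1:ℚ_[p]) := by
      funext i
      rw [hddef, hd'def, ← zpow_add₀ hp0, neg_add_cancel, zpow_zero]
    rw [this, Matrix.diagonal_one]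
  have hd'd : Matrix.diagonal d' * Matrix.diagonal d = 1 := by
    rw [Matrix.diagonal_mul_diagonal]
    have : (fun i => d' i * d i) = fun _ => (1:ℚ_[p]) := by
      funext i
      rw [hddef, hd'def, ← zpow_add₀ hp0, add_neg_cancel, zpow_zero]
    rw [this, Matrix.diagonal_one]
  set Du : GL (Fin n) ℚ_[p] := ⟨Matrix.diagonal d, Matrix.diagonal d', hdd', hd'd⟩ with hDu
  have hnd : ∀ i : Fin n, ‖d i‖ = (p:ℝ) ^ ((t * (i:ℕ) : ℤ)) := by
    intro i; rw [hddef]; rw [Padic.norm_p_zpow, neg_neg]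
  have hnd' : ∀ i : Fin n, ‖d' i‖ = (p:ℝ) ^ (-(t * (i:ℕ) : ℤ)) := by
    intro i; rw [hd'def]; rw [Padic.norm_p_zpow]
  set B : GL (Fin n) ℚ_[p] := Du * A * Du⁻¹ with hBdef
  have hBcoe : (B : Matrix (Fin n) (Fin n) ℚ_[p]) =
      Matrix.diagonal d * (A : Matrix (Fin n) (Fin n) ℚ_[p]) * Matrix.diagonal d' := rfl
  have hB1 : ∀ i j : Fin n, ‖(B : Matrix (Fin n) (Fin n) ℚ_[p]) i j‖ ≤ 1 := by
    intro i j
    have hentry : (B : Matrix (Fin n) (Fin n) ℚ_[p]) i j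
        = d i * (A : Matrix (Fin n) (Fin n) ℚ_[p]) i j * d' j := by
      rw [hBcoe, Matrix.mul_diagonal, Matrix.diagonal_mul]
    rw [hentry]
    rcases lt_trichotomy j i with hji | hij | hij
    · rw [hlow i j hji, mul_zero, zero_mul, norm_zero]; exact zero_le_one
    · subst hij
      have : d j * (A : Matrix (Fin n) (Fin n) ℚ_[p]) j j * d' j = 1 := by
        rw [hdiag j, mul_one]
        have := congrFun (congrFun hdd' j) j
        rwa [Matrix.diagonal_mul_diagonal, Matrix.diagonal_apply_eq, Matrix.one_apply_eq] at this
      rw [this, norm_one]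
    · have hij' : (i:ℕ) + 1 ≤ (j:ℕ) := by
        have := hij
        rw [Fin.lt_def] at this
        omega
      rw [norm_mul, norm_mul, hnd, hnd']
      have h1 : ‖(A : Matrix (Fin n) (Fin n) ℚ_[p]) i j‖ ≤ (p:ℝ) ^ ((t:ℤ)) := by
        have := ht i j
        rwa [← zpow_natCast] at this
      have hple : (0:ℝ) < p := by linarith
      calc (p:ℝ) ^ ((t * (i:ℕ) : ℤ)) * ‖(A : Matrix (Fin n) (Fin n) ℚ_[p]) i j‖ *
            (p:ℝ) ^ (-(t * (j:ℕ) : ℤ))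
          ≤ (p:ℝ) ^ ((t * (i:ℕ) : ℤ)) * (p:ℝ) ^ ((t:ℤ)) * (p:ℝ) ^ (-(t * (j:ℕ) : ℤ)) := by
            apply mul_le_mul_of_nonneg_right _ (zpow_nonneg hple.le _)
            exact mul_le_mul_of_nonneg_left h1 (zpow_nonneg hple.le _)
        _ = (p:ℝ) ^ ((t * (i:ℕ) : ℤ) + (t:ℤ) + (-(t * (j:ℕ) : ℤ))) := by
            rw [← zpow_add₀ (ne_of_gt hple), ← zpow_add₀ (ne_of_gt hple)]
        _ ≤ 1 := by
            apply zpow_le_one_of_nonpos₀ hp.le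
            have : (t:ℤ) * ((i:ℕ) + 1) ≤ (t:ℤ) * (j:ℕ) := by
              apply mul_le_mul_of_nonneg_left _ (by positivity)
              exact_mod_cast hij'
            push_cast at this ⊢
            nlinarith [this]
  -- determinant of B is 1
  have hdetA : (A : Matrix (Fin n) (Fin n) ℚ_[p]).det = 1 := by
    rw [Matrix.det_of_upperTriangular (fun i j h => hlow i j h)]
    simp [hdiag]
  have hdetB : (B : Matrix (Fin n) (Fin n) ℚ_[p]).det = 1 := by
    rw [hBcoe, Matrix.det_mul, Matrix.det_mul]
    have : (Matrix.diagonal d).det * (Matrix.diagonal d').det = 1 := by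
      rw [← Matrix.det_mul, hdd', Matrix.det_one]
    calc (Matrix.diagonal d).det * (A : Matrix (Fin n) (Fin n) ℚ_[p]).det *
          (Matrix.diagonal d').det
        = (Matrix.diagonal d).det * (Matrix.diagonal d').det *
          (A : Matrix (Fin n) (Fin n) ℚ_[p]).det := by ring
      _ = 1 := by rw [this, one_mul, hdetA]
  -- lift B to a matrix over ℤ_p
  set B' : Matrix (Fin n) (Fin n) ℤ_[p] := fun i j => ⟨(B : Matrix (Fin n) (Fin n) ℚ_[p]) i j,
    hB1 i j⟩ with hB'def
  have hmap : (PadicInt.Coe.ringHom (p := p)).mapMatrix B' = (B : Matrix (Fin n) (Fin n) ℚ_[p]) :=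
    rfl
  have hdetB' : B'.det = 1 := by
    apply Subtype.coe_injective
    show ((B'.det : ℤ_[p]) : ℚ_[p]) = ((1 : ℤ_[p]) : ℚ_[p])
    have : ((B'.det : ℤ_[p]) : ℚ_[p]) = (B : Matrix (Fin n) (Fin n) ℚ_[p]).det := by
      rw [show ((B'.det : ℤ_[p]) : ℚ_[p]) = PadicInt.Coe.ringHom (p := p) B'.det from rfl,
        RingHom.map_det, hmap]
    rw [this, hdetB]; rfl
  set Bu : (Matrix (Fin n) (Fin n) ℤ_[p])ˣ := B'.nonsingInvUnit (by rw [hdetB']; exact isUnit_one)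
    with hBu
  have hBuval : (Bu : Matrix (Fin n) (Fin n) ℤ_[p]) = B' := rfl
  set φ : (Matrix (Fin n) (Fin n) ℤ_[p])ˣ →* (Matrix (Fin n) (Fin n) ℚ_[p])ˣ :=
    Units.map (PadicInt.Coe.ringHom (p := p)).mapMatrix.toMonoidHom with hφ
  have hφBu : φ Bu = B := by
    apply Units.ext
    rw [hφ, Units.coe_map]
    exact hmap
  -- the bound
  refine ⟨(p:ℝ) ^ (t * n), by positivity, fun k i j => ?_⟩
  have hAconj : A = Du⁻¹ * B * Du := by rw [hBdef]; group
  have hAk : A ^ k = Du⁻¹ * (φ (Bu ^ k)) * Du := by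
    rw [map_zpow, hφBu, hAconj]
    calc (Du⁻¹ * B * Du) ^ k = (Du⁻¹ * B * Du⁻¹⁻¹) ^ k := by rw [inv_inv]
      _ = Du⁻¹ * B ^ k * Du⁻¹⁻¹ := conj_zpow
      _ = Du⁻¹ * B ^ k * Du := by rw [inv_inv]
  have hDuinv : ((Du⁻¹ : GL (Fin n) ℚ_[p]) : Matrix (Fin n) (Fin n) ℚ_[p])
      = Matrix.diagonal d' := rfl
  have hXnorm : ∀ i j : Fin n,
      ‖((φ (Bu ^ k) : GL (Fin n) ℚ_[p]) : Matrix (Fin n) (Fin n) ℚ_[p]) i j‖ ≤ 1 := by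
    intro i j
    have : ((φ (Bu ^ k) : GL (Fin n) ℚ_[p]) : Matrix (Fin n) (Fin n) ℚ_[p]) i j
        = (((Bu ^ k : (Matrix (Fin n) (Fin n) ℤ_[p])ˣ) : Matrix (Fin n) (Fin n) ℤ_[p]) i j
          : ℚ_[p]) := rfl
    rw [this]
    exact (((Bu ^ k : (Matrix (Fin n) (Fin n) ℤ_[p])ˣ) : Matrix (Fin n) (Fin n) ℤ_[p]) i j).2
  have hentry : ((A ^ k : GL (Fin n) ℚ_[p]) : Matrix (Fin n) (Fin n) ℚ_[p]) i j
      = d' i * ((φ (Bu ^ k) : GL (Fin n) ℚ_[p]) : Matrix (Fin n) (Fin n) ℚ_[p]) i j * d j := by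
    rw [hAk]
    show (((Du⁻¹ : GL (Fin n) ℚ_[p]) : Matrix (Fin n) (Fin n) ℚ_[p]) *
      ((φ (Bu ^ k) : GL (Fin n) ℚ_[p]) : Matrix (Fin n) (Fin n) ℚ_[p]) *
      ((Du : GL (Fin n) ℚ_[p]) : Matrix (Fin n) (Fin n) ℚ_[p])) i j = _
    rw [hDuinv, show ((Du : GL (Fin n) ℚ_[p]) : Matrix (Fin n) (Fin n) ℚ_[p])
      = Matrix.diagonal d from rfl, Matrix.mul_diagonal, Matrix.diagonal_mul]
  rw [hentry, norm_mul, norm_mul, hnd, hnd']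
  have hple : (0:ℝ) < p := by linarith
  calc (p:ℝ) ^ (-(t * (i:ℕ) : ℤ)) *
        ‖((φ (Bu ^ k) : GL (Fin n) ℚ_[p]) : Matrix (Fin n) (Fin n) ℚ_[p]) i j‖ *
        (p:ℝ) ^ ((t * (j:ℕ) : ℤ))
      ≤ 1 * 1 * (p:ℝ) ^ ((t * (j:ℕ) : ℤ)) := by
        apply mul_le_mul_of_nonneg_right _ (zpow_nonneg hple.le _)
        exact mul_le_mul (zpow_le_one_of_nonpos₀ hp.le (neg_nonpos.2 (by positivity))) (hXnorm i j)
          (norm_nonneg _) zero_le_one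
    _ = (p:ℝ) ^ ((t * (j:ℕ) : ℤ)) := by rw [one_mul, one_mul]
    _ ≤ (p:ℝ) ^ ((t * n : ℤ)) := by
        apply zpow_le_zpow_right₀ hp.le
        have : (j:ℕ) ≤ n := le_of_lt j.2
        exact_mod_cast Nat.mul_le_mul_left t this
    _ = (p:ℝ) ^ (t * n) := by rw [← zpow_natCast]; norm_cast

lemma compact_bounded {n : ℕ} (c : ℝ) :
    IsCompact {B : GL (Fin n) ℚ_[p] |
      (∀ i j : Fin n, ‖(B : Matrix (Fin n) (Fin n) ℚ_[p]) i j‖ ≤ c) ∧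
      (∀ i j : Fin n, ‖((B⁻¹ : GL (Fin n) ℚ_[p]) : Matrix (Fin n) (Fin n) ℚ_[p]) i j‖ ≤ c)} := by
  rw [Units.isEmbedding_embedProduct.isCompact_iff]
  set P : Set (Matrix (Fin n) (Fin n) ℚ_[p]) := {X | ∀ i j, ‖X i j‖ ≤ c} with hP
  have hPc : IsCompact P := by
    have : P = Set.univ.pi (fun _ : Fin n => Set.univ.pi
        (fun _ : Fin n => Metric.closedBall (0:ℚ_[p]) c)) := by
      ext X
      constructor
      · intro hX
        exact fun i _ j _ => by
          rw [Metric.mem_closedBall, dist_zero_right]; exact hX i j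
      · intro hX i j
        have := hX i (Set.mem_univ i) j (Set.mem_univ j)
        rwa [Metric.mem_closedBall, dist_zero_right] at this
    rw [this]
    exact isCompact_univ_pi fun i => isCompact_univ_pi fun j => isCompact_closedBall 0 c
  set R : Set (Matrix (Fin n) (Fin n) ℚ_[p] × (Matrix (Fin n) (Fin n) ℚ_[p])ᵐᵒᵖ) :=
    {q | q.1 * q.2.unop = 1 ∧ q.2.unop * q.1 = 1} with hR
  have hRc : IsClosed R := by
    have hsplit : R = {q : Matrix (Fin n) (Fin n) ℚ_[p] × (Matrix (Fin n) (Fin n) ℚ_[p])ᵐᵒᵖ |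
        q.1 * q.2.unop = 1} ∩ {q | q.2.unop * q.1 = 1} := rfl
    rw [hsplit]
    have hcont1 : Continuous fun q : Matrix (Fin n) (Fin n) ℚ_[p] ×
        (Matrix (Fin n) (Fin n) ℚ_[p])ᵐᵒᵖ => q.1 * q.2.unop :=
      continuous_fst.mul (MulOpposite.continuous_unop.comp continuous_snd)
    have hcont2 : Continuous fun q : Matrix (Fin n) (Fin n) ℚ_[p] ×
        (Matrix (Fin n) (Fin n) ℚ_[p])ᵐᵒᵖ => q.2.unop * q.1 :=
      (MulOpposite.continuous_unop.comp continuous_snd).mul continuous_fst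
    exact (isClosed_eq hcont1 continuous_const).inter (isClosed_eq hcont2 continuous_const)
  have himg : (Units.embedProduct (Matrix (Fin n) (Fin n) ℚ_[p])) ''
      {B : GL (Fin n) ℚ_[p] |
        (∀ i j : Fin n, ‖(B : Matrix (Fin n) (Fin n) ℚ_[p]) i j‖ ≤ c) ∧
        (∀ i j : Fin n, ‖((B⁻¹ : GL (Fin n) ℚ_[p]) : Matrix (Fin n) (Fin n) ℚ_[p]) i j‖ ≤ c)}
      = (P ×ˢ (MulOpposite.op '' P)) ∩ R := by
    ext q
    constructor
    · rintro ⟨u, ⟨hu1, hu2⟩, rfl⟩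
      refine ⟨⟨hu1, ⟨((u⁻¹ : GL (Fin n) ℚ_[p]) : Matrix (Fin n) (Fin n) ℚ_[p]), hu2, rfl⟩⟩,
        ?_, ?_⟩
      · show (u : Matrix (Fin n) (Fin n) ℚ_[p]) *
          (MulOpposite.op ((u⁻¹ : GL (Fin n) ℚ_[p]) : Matrix (Fin n) (Fin n) ℚ_[p])).unop = 1
        rw [MulOpposite.unop_op]
        exact u.mul_inv
      · show (MulOpposite.op ((u⁻¹ : GL (Fin n) ℚ_[p]) : Matrix (Fin n) (Fin n) ℚ_[p])).unop *
          (u : Matrix (Fin n) (Fin n) ℚ_[p]) = 1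
        rw [MulOpposite.unop_op]
        exact u.inv_mul
    · rintro ⟨⟨hq1, X, hX, hXq⟩, hr1, hr2⟩
      have hXu : X = q.2.unop := by rw [← hXq, MulOpposite.unop_op]
      refine ⟨⟨q.1, q.2.unop, hr1, hr2⟩, ⟨hq1, ?_⟩, ?_⟩
      · intro i j
        show ‖MulOpposite.unop q.2 i j‖ ≤ c
        rw [← hXu]
        exact hX i j
      · show (q.1, MulOpposite.op q.2.unop) = q
        exact Prod.ext rfl (MulOpposite.op_unop q.2)
  rw [himg]
  exact (hPc.prod (hPc.image MulOpposite.continuous_op)).inter_right hRc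

lemma realToPadic_pow (M : ℕ) :
    realToPadic p ((p:ℝ) ^ M) = (p : ℚ_[p]) ^ (M : ℤ) := by
  have hp : (1:ℝ) < p := by exact_mod_cast (Fact.out : p.Prime).one_lt
  unfold realToPadic
  rw [Real.logb_pow, Real.logb_self_eq_one hp, mul_one, Int.floor_natCast]

lemma norm_p_zpow_neg (M : ℕ) : ‖(p : ℚ_[p]) ^ (-(M:ℤ))‖ = (p:ℝ) ^ M := by
  rw [Padic.norm_p_zpow, neg_neg, zpow_natCast]

/-- The key computation: for each `M ≥ 1` there is a unipotent matrix whose sphere map sends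
the two chosen points to explicit vectors. -/
lemma key_step {n : ℕ} (hn : 2 ≤ n) (M : ℕ) (hM : 1 ≤ M) :
    ∃ A ∈ unipotentUpper p n,
      sphereMap p (A : Matrix (Fin n) (Fin n) ℚ_[p]) (Pi.single (⟨1, by omega⟩ : Fin n) 1)
        = (fun i => if i = (⟨0, by omega⟩ : Fin n) then 1
            else if i = (⟨1, by omega⟩ : Fin n) then (p:ℚ_[p]) ^ M else 0) ∧
      sphereMap p (A : Matrix (Fin n) (Fin n) ℚ_[p])
          (Pi.single (⟨0, by omega⟩ : Fin n) 1 + Pi.single (⟨1, by omega⟩ : Fin n) 1)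
        = (fun i => if i = (⟨0, by omega⟩ : Fin n) then 1 + (p:ℚ_[p]) ^ M
            else if i = (⟨1, by omega⟩ : Fin n) then (p:ℚ_[p]) ^ M else 0) := by
  have hp : (1:ℝ) < p := by exact_mod_cast (Fact.out : p.Prime).one_lt
  have hp0 : (p : ℚ_[p]) ≠ 0 := by
    exact_mod_cast Nat.cast_ne_zero.2 (Fact.out : p.Prime).ne_zero
  set i0 : Fin n := ⟨0, by omega⟩ with hi0
  set i1 : Fin n := ⟨1, by omega⟩ with hi1
  have h01 : i0 ≠ i1 := by simp [hi0, hi1, Fin.ext_iff]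
  set c : ℚ_[p] := (p : ℚ_[p]) ^ (-(M:ℤ)) with hc
  set E : Matrix (Fin n) (Fin n) ℚ_[p] := Matrix.single i0 i1 c with hE
  set C : Matrix (Fin n) (Fin n) ℚ_[p] := 1 + E with hCdef
  have hEE : E * E = 0 := by rw [hE]; simp [Ne.symm h01]
  have h1 : C * (1 - E) = 1 := by
    rw [hCdef, mul_sub, mul_one, add_mul, one_mul, hEE, add_zero, add_sub_cancel_right]
  have h2 : (1 - E) * C = 1 := by
    rw [hCdef, mul_add, mul_one, sub_mul, one_mul, hEE, sub_zero, sub_add_cancel]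
  refine ⟨⟨C, 1 - E, h1, h2⟩, ⟨?_, ?_⟩, ?_, ?_⟩
  · -- lower triangular entries vanish
    intro i j hji
    have hij : i ≠ j := (ne_of_gt hji)
    have : ¬(i0 = i ∧ i1 = j) := by
      rintro ⟨ha, hb⟩
      rw [← ha, ← hb] at hji
      exact absurd hji (by simp [hi0, hi1, Fin.lt_def])
    show C i j = 0
    rw [hCdef, Matrix.add_apply, Matrix.one_apply_ne (Ne.symm hij ).symm,
      hE, Matrix.single_apply_of_ne _ _ _ _ _ this, add_zero]
  · intro i
    have : ¬(i0 = i ∧ i1 = i) := by rintro ⟨ha, hb⟩; exact h01 (ha.trans hb.symm)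
    show C i i = 1
    rw [hCdef, Matrix.add_apply, Matrix.one_apply_eq,
      hE, Matrix.single_apply_of_ne _ _ _ _ _ this, add_zero]
  · -- sphereMap on x = e_{i1}
    have hnormc : ‖c‖ = (p:ℝ)^M := norm_p_zpow_neg p M
    have h1pM : (1:ℝ) ≤ (p:ℝ)^M := one_le_pow₀ hp.le
    have hC01 : C i0 i1 = c := by
      rw [hCdef, Matrix.add_apply, Matrix.one_apply_ne h01, hE,
        Matrix.single_apply_same, zero_add]
    have hC11 : C i1 i1 = 1 := by
      rw [hCdef, Matrix.add_apply, Matrix.one_apply_eq, hE,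
        Matrix.single_apply_of_ne _ _ _ _ _ (by rintro ⟨ha, _⟩; exact h01 ha), add_zero]
    have hCo1 : ∀ i, i ≠ i0 → i ≠ i1 → C i i1 = 0 := by
      intro i hi hi'
      rw [hCdef, Matrix.add_apply, Matrix.one_apply_ne hi', hE,
        Matrix.single_apply_of_ne _ _ _ _ _ (by rintro ⟨ha, _⟩; exact hi ha.symm), add_zero]
    have hv : C.mulVec (Pi.single i1 1) = fun i => C i i1 := by
      funext i; simp [Matrix.mulVec_single]
    have hnv : ‖C.mulVec (Pi.single i1 1)‖ = (p:ℝ)^M := by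
      rw [hv]
      apply le_antisymm
      · rw [pi_norm_le_iff_of_nonneg (by positivity)]
        intro i
        by_cases hi : i = i0
        · rw [hi, hC01, hnormc]
        · by_cases hi' : i = i1
          · rw [hi', hC11, norm_one]; exact h1pM
          · rw [hCo1 i hi hi', norm_zero]; positivity
      · have := norm_le_pi_norm (fun i => C i i1) i0
        rwa [hC01, hnormc] at this
    unfold sphereMap
    rw [hnv, realToPadic_pow, hv]
    funext i
    simp only [Pi.smul_apply, smul_eq_mul]
    by_cases hi : i = i0
    · rw [if_pos hi, hi, hC01, hc, ← zpow_add₀ hp0, add_neg_cancel, zpow_zero]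
    · rw [if_neg hi]
      by_cases hi' : i = i1
      · rw [if_pos hi', hi', hC11, mul_one, zpow_natCast]
      · rw [if_neg hi', hCo1 i hi hi', mul_zero]
  · -- sphereMap on y = e_{i0} + e_{i1}
    have hnormc : ‖c‖ = (p:ℝ)^M := norm_p_zpow_neg p M
    have h1pM : (1:ℝ) < (p:ℝ)^M := one_lt_pow₀ hp (by omega)
    have hC01 : C i0 i1 = c := by
      rw [hCdef, Matrix.add_apply, Matrix.one_apply_ne h01, hE,
        Matrix.single_apply_same, zero_add]
    have hC11 : C i1 i1 = 1 := by
      rw [hCdef, Matrix.add_apply, Matrix.one_apply_eq, hE,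
        Matrix.single_apply_of_ne _ _ _ _ _ (by rintro ⟨ha, _⟩; exact h01 ha), add_zero]
    have hCo1 : ∀ i, i ≠ i0 → i ≠ i1 → C i i1 = 0 := by
      intro i hi hi'
      rw [hCdef, Matrix.add_apply, Matrix.one_apply_ne hi', hE,
        Matrix.single_apply_of_ne _ _ _ _ _ (by rintro ⟨ha, _⟩; exact hi ha.symm), add_zero]
    have hC00 : C i0 i0 = 1 := by
      rw [hCdef, Matrix.add_apply, Matrix.one_apply_eq, hE,
        Matrix.single_apply_of_ne _ _ _ _ _ (by rintro ⟨_, hb⟩; exact h01 hb.symm), add_zero]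
    have hCo0 : ∀ i, i ≠ i0 → C i i0 = 0 := by
      intro i hi
      rw [hCdef, Matrix.add_apply, Matrix.one_apply_ne hi, hE,
        Matrix.single_apply_of_ne _ _ _ _ _ (by rintro ⟨_, hb⟩; exact h01 hb.symm), add_zero]
    have h1c : ‖(1:ℚ_[p]) + c‖ = (p:ℝ)^M := by
      rw [Padic.add_eq_max_of_ne (by rw [norm_one, hnormc]; exact (ne_of_lt h1pM)),
        norm_one, hnormc, max_eq_right h1pM.le]
    have hw : C.mulVec (Pi.single i0 1 + Pi.single i1 1) = fun i => C i i0 + C i i1 := by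
      rw [Matrix.mulVec_add]; funext i; simp [Matrix.mulVec_single]
    have hnw : ‖C.mulVec (Pi.single i0 1 + Pi.single i1 1)‖ = (p:ℝ)^M := by
      rw [hw]
      apply le_antisymm
      · rw [pi_norm_le_iff_of_nonneg (by positivity)]
        intro i
        by_cases hi : i = i0
        · rw [hi, hC00, hC01, h1c]
        · by_cases hi' : i = i1
          · rw [hi', hCo0 i1 (Ne.symm h01), hC11, zero_add, norm_one]; exact h1pM.le
          · rw [hCo0 i hi, hCo1 i hi hi', add_zero, norm_zero]; positivity
      · have := norm_le_pi_norm (fun i => C i i0 + C i i1) i0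
        rwa [hC00, hC01, h1c] at this
    unfold sphereMap
    rw [hnw, realToPadic_pow, hw]
    funext i
    simp only [Pi.smul_apply, smul_eq_mul]
    by_cases hi : i = i0
    · rw [if_pos hi, hi, hC00, hC01, hc, mul_add, mul_one, ← zpow_add₀ hp0, add_neg_cancel,
        zpow_zero, zpow_natCast, add_comm]
    · rw [if_neg hi]
      by_cases hi' : i = i1
      · rw [if_pos hi', hi', hCo0 i1 (Ne.symm h01), hC11, zero_add, mul_one, zpow_natCast]
      · rw [if_neg hi', hCo0 i hi, hCo1 i hi hi', add_zero, mul_zero]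

lemma part2 {n : ℕ} (hn : 2 ≤ n) :
    ¬ ActsDistallyOn {f : (Fin n → ℚ_[p]) → Fin n → ℚ_[p] |
        ∃ A ∈ unipotentUpper p n, f = sphereMap p (A : Matrix (Fin n) (Fin n) ℚ_[p])}
      (Metric.sphere (0 : Fin n → ℚ_[p]) 1) := by
  intro h
  have hp : (1:ℝ) < p := by exact_mod_cast (Fact.out : p.Prime).one_lt
  choose A hAm hAx hAy using fun m : ℕ => key_step p hn (m+1) (by omega)
  set i0 : Fin n := ⟨0, by omega⟩ with hi0def
  set i1 : Fin n := ⟨1, by omega⟩ with hi1def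
  have h01 : i0 ≠ i1 := by simp [hi0def, hi1def, Fin.ext_iff]
  have hx_mem : (Pi.single i1 1 : Fin n → ℚ_[p]) ∈ Metric.sphere (0 : Fin n → ℚ_[p]) 1 := by
    rw [mem_sphere_zero_iff_norm, Pi.norm_single, norm_one]
  have hd_mem : (Pi.single i0 1 : Fin n → ℚ_[p]) ∈ Metric.sphere (0 : Fin n → ℚ_[p]) 1 := by
    rw [mem_sphere_zero_iff_norm, Pi.norm_single, norm_one]
  have hy_mem : (Pi.single i0 1 + Pi.single i1 1 : Fin n → ℚ_[p])
      ∈ Metric.sphere (0 : Fin n → ℚ_[p]) 1 := by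
    rw [mem_sphere_zero_iff_norm]
    apply le_antisymm
    · rw [pi_norm_le_iff_of_nonneg zero_le_one]
      intro i
      by_cases hi : i = i0
      · rw [Pi.add_apply, hi, Pi.single_eq_same, Pi.single_eq_of_ne h01, add_zero, norm_one]
      · by_cases hi' : i = i1
        · rw [Pi.add_apply, hi', Pi.single_eq_same, Pi.single_eq_of_ne h01.symm, zero_add,
            norm_one]
        · rw [Pi.add_apply, Pi.single_eq_of_ne hi, Pi.single_eq_of_ne hi', add_zero, norm_zero]
          exact zero_le_one
    · have := norm_le_pi_norm ((Pi.single i0 1 + Pi.single i1 1 : Fin n → ℚ_[p])) i0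
      rwa [Pi.add_apply, Pi.single_eq_same, Pi.single_eq_of_ne h01, add_zero, norm_one] at this
  have hxy : (Pi.single i1 1 : Fin n → ℚ_[p]) ≠
      (Pi.single i0 1 + Pi.single i1 1 : Fin n → ℚ_[p]) := by
    intro hcon
    have := congrFun hcon i0
    rw [Pi.single_eq_of_ne h01, Pi.add_apply, Pi.single_eq_same, Pi.single_eq_of_ne h01,
      add_zero] at this
    exact zero_ne_one this
  have hplim : Filter.Tendsto (fun m : ℕ => (p:ℚ_[p]) ^ (m+1)) Filter.atTop (nhds 0) := by
    have hlt : ‖(p:ℚ_[p])‖ < 1 := by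
      rw [Padic.norm_p]
      exact inv_lt_one_of_one_lt₀ hp
    exact (tendsto_pow_atTop_nhds_zero_of_norm_lt_one hlt).comp (Filter.tendsto_add_atTop_nat 1)
  have hsx_lim : Filter.Tendsto
      (fun m : ℕ => fun i => if i = i0 then 1 else if i = i1 then (p:ℚ_[p]) ^ (m+1) else 0)
      Filter.atTop (nhds (Pi.single i0 1 : Fin n → ℚ_[p])) := by
    rw [tendsto_pi_nhds]
    intro i
    by_cases hi : i = i0
    · simp only [if_pos hi]
      rw [hi, Pi.single_eq_same]
      exact tendsto_const_nhds
    · simp only [if_neg hi]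
      rw [Pi.single_eq_of_ne hi]
      by_cases hi' : i = i1
      · simpa only [if_pos hi'] using hplim
      · simp only [if_neg hi']
        exact tendsto_const_nhds
  have hsy_lim : Filter.Tendsto
      (fun m : ℕ => fun i => if i = i0 then 1 + (p:ℚ_[p]) ^ (m+1)
        else if i = i1 then (p:ℚ_[p]) ^ (m+1) else 0)
      Filter.atTop (nhds (Pi.single i0 1 : Fin n → ℚ_[p])) := by
    rw [tendsto_pi_nhds]
    intro i
    by_cases hi : i = i0
    · simp only [if_pos hi]
      rw [hi, Pi.single_eq_same]
      simpa using (tendsto_const_nhds (x := (1:ℚ_[p]))).add hplim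
    · simp only [if_neg hi]
      rw [Pi.single_eq_of_ne hi]
      by_cases hi' : i = i1
      · simpa only [if_pos hi'] using hplim
      · simp only [if_neg hi']
        exact tendsto_const_nhds
  have hcl : ((Pi.single i0 1 : Fin n → ℚ_[p]), (Pi.single i0 1 : Fin n → ℚ_[p])) ∈
      closure ((fun f => (f (Pi.single i1 1 : Fin n → ℚ_[p]),
        f (Pi.single i0 1 + Pi.single i1 1 : Fin n → ℚ_[p]))) ''
        {f : (Fin n → ℚ_[p]) → Fin n → ℚ_[p] |
          ∃ B ∈ unipotentUpper p n, f = sphereMap p (B : Matrix (Fin n) (Fin n) ℚ_[p])}) := by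
    refine mem_closure_of_tendsto (hsx_lim.prodMk_nhds hsy_lim)
      (Filter.Eventually.of_forall fun m => ?_)
    exact ⟨_, ⟨A m, hAm m, rfl⟩, Prod.ext (hAx m) (hAy m)⟩
  exact h _ hx_mem _ hy_mem hxy _ hd_mem hcl

lemma part1 {n : ℕ} (A : GL (Fin n) ℚ_[p]) (hA : A ∈ unipotentUpper p n) :
    IsCompact (closure {B : GL (Fin n) ℚ_[p] | ∃ k : ℤ, B = A ^ k}) := by
  obtain ⟨c, hc0, hb⟩ := entry_bound p A hA
  have hKc : IsCompact {B : GL (Fin n) ℚ_[p] |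
      (∀ i j : Fin n, ‖(B : Matrix (Fin n) (Fin n) ℚ_[p]) i j‖ ≤ c) ∧
      (∀ i j : Fin n, ‖((B⁻¹ : GL (Fin n) ℚ_[p]) : Matrix (Fin n) (Fin n) ℚ_[p]) i j‖ ≤ c)} :=
    compact_bounded p c
  have hsub : {B : GL (Fin n) ℚ_[p] | ∃ k : ℤ, B = A ^ k} ⊆ {B : GL (Fin n) ℚ_[p] |
      (∀ i j : Fin n, ‖(B : Matrix (Fin n) (Fin n) ℚ_[p]) i j‖ ≤ c) ∧
      (∀ i j : Fin n, ‖((B⁻¹ : GL (Fin n) ℚ_[p]) : Matrix (Fin n) (Fin n) ℚ_[p]) i j‖ ≤ c)} := by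
    rintro B ⟨k, rfl⟩
    refine ⟨hb k, fun i j => ?_⟩
    rw [← zpow_neg]
    exact hb (-k) i j
  exact hKc.of_isClosed_subset isClosed_closure (closure_minimal hsub hKc.isClosed)

end Aux

/-- For `n ≥ 2`, every element of the group `U` of upper triangular matrices with unit diagonal
in `SL(n, ℚ_p)` generates a relatively compact cyclic subgroup of `GL(n, ℚ_p)`, yet the family
`{T̄ : T ∈ U}` does not act distally on the `p`-adic unit sphere. -/
theorem stmt11 (p : ℕ) [Fact p.Prime] (n : ℕ) (hn : 2 ≤ n) :
    (∀ A ∈ unipotentUpper p n,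
      IsCompact (closure {B : GL (Fin n) ℚ_[p] | ∃ k : ℤ, B = A ^ k})) ∧
    ¬ ActsDistallyOn {f : (Fin n → ℚ_[p]) → Fin n → ℚ_[p] |
        ∃ A ∈ unipotentUpper p n, f = sphereMap p (A : Matrix (Fin n) (Fin n) ℚ_[p])}
      (Metric.sphere (0 : Fin n → ℚ_[p]) 1) :=
  ⟨fun A hA => part1 p A hA, part2 p hn⟩
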